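/- Let M ≥ 2 be an integer and let P, f, R > 0 be real numbers, and set c = M·R. For T > 0 define x(T) = M(M−1)·[ln(T·P/c) + ln((1+fP)^{1/(M−1)} − 1)] / ln(1+fP) and L(T) = (x(T)/T)·R + ln(1 + P·(1+fP)^{−x(T)/(M(M−1))}). Then lim_{T→∞} T·L(T)/ln T = R·M(M−1)/ln(1+fP); equivalently, L(T) = R·(M(M−1)/ln(1+fP))·(ln T)/T + o((ln T)/T) as T → ∞. (Theorem 7: spectral efficiency loss of the half-duplex strategy with closed-loop training relative to the genie-aided system.) -/

import Mathlib

open Real Filter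

/-- Theorem 7 of the paper: the spectral efficiency loss of the half-duplex strategy with
closed-loop training, at the approximately optimal training duration, satisfies
`T * L(T) / ln T → R * M * (M-1) / ln(1+fP)` as `T → ∞`. -/
theorem SE_loss_halfduplex_closed
    (M : ℕ) (hM : 2 ≤ M) (P f R : ℝ)
    (hP : 0 < P) (hf : 0 < f) (hR : 0 < R)
    (c : ℝ) (hc : c = (M : ℝ) * R)
    (x : ℝ → ℝ)
    (hxdef : ∀ T : ℝ, x T = (M : ℝ) * ((M : ℝ) - 1) *
        (Real.log (T * P / c) +
          Real.log ((1 + f * P) ^ ((1 : ℝ) / ((M : ℝ) - 1)) - 1)) /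
        Real.log (1 + f * P))
    (L : ℝ → ℝ)
    (hLdef : ∀ T : ℝ, L T = (x T / T) * R +
        Real.log (1 + P * (1 + f * P) ^ (-(x T / ((M : ℝ) * ((M : ℝ) - 1)))))) :
    Tendsto (fun T : ℝ => T * L T / Real.log T) atTop
      (nhds (R * (M : ℝ) * ((M : ℝ) - 1) / Real.log (1 + f * P))) := by
  have hM2 : (2:ℝ) ≤ (M:ℝ) := by exact_mod_cast hM
  have hM1 : (0:ℝ) < (M:ℝ) - 1 := by linarith
  have hMpos : (0:ℝ) < (M:ℝ) := by linarith
  have hfP : 0 < f * P := mul_pos hf hP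
  have hb : (1:ℝ) < 1 + f * P := by linarith
  have hb0 : (0:ℝ) < 1 + f * P := by linarith
  have hlam : 0 < Real.log (1 + f * P) := Real.log_pos hb
  have hcpos : 0 < c := by rw [hc]; positivity
  have hA : 1 < (1 + f * P) ^ ((1:ℝ)/((M:ℝ)-1)) := by
    rw [Real.one_lt_rpow_iff_of_pos hb0]
    exact Or.inl ⟨hb, by positivity⟩
  set D := (1 + f * P) ^ ((1:ℝ)/((M:ℝ)-1)) - 1 with hDdef
  have hD : 0 < D := by simp only [hDdef]; linarith
  have ha : 0 < (M:ℝ) * ((M:ℝ)-1) := mul_pos hMpos hM1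
  -- key algebraic identity
  have key : ∀ T : ℝ, 0 < T →
      P * (1 + f * P) ^ (-(x T / ((M:ℝ) * ((M:ℝ)-1)))) = c / (T * D) := by
    intro T hT
    have hTPc : 0 < T * P / c := by positivity
    have hx : x T / ((M:ℝ)*((M:ℝ)-1)) =
        (Real.log (T*P/c) + Real.log D) / Real.log (1 + f * P) := by
      rw [hxdef]; field_simp
    rw [hx, Real.rpow_def_of_pos hb0]
    have heq : Real.log (1+f*P) * -((Real.log (T*P/c) + Real.log D) / Real.log (1+f*P))
        = -(Real.log (T*P/c) + Real.log D) := by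
      field_simp
    rw [heq, neg_add, Real.exp_add, Real.exp_neg, Real.exp_neg,
      Real.exp_log hTPc, Real.exp_log hD]
    field_simp
  -- first term
  have h1 : Tendsto (fun T : ℝ => R * x T / Real.log T) atTop
      (nhds (R * (M:ℝ) * ((M:ℝ)-1) / Real.log (1 + f * P))) := by
    have hconst : Tendsto (fun T : ℝ =>
        R * ((M:ℝ)*((M:ℝ)-1)) / Real.log (1+f*P) +
        (R * ((M:ℝ)*((M:ℝ)-1)) * (Real.log (P/c) + Real.log D) / Real.log (1+f*P))
          * (Real.log T)⁻¹) atTop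
        (nhds (R * ((M:ℝ)*((M:ℝ)-1)) / Real.log (1+f*P) +
          (R * ((M:ℝ)*((M:ℝ)-1)) * (Real.log (P/c) + Real.log D) / Real.log (1+f*P)) * 0)) := by
      exact tendsto_const_nhds.add
        (Tendsto.const_mul _ (Real.tendsto_log_atTop.inv_tendsto_atTop))
    have hcongr : Tendsto (fun T : ℝ =>
        R * ((M:ℝ)*((M:ℝ)-1)) / Real.log (1+f*P) +
        (R * ((M:ℝ)*((M:ℝ)-1)) * (Real.log (P/c) + Real.log D) / Real.log (1+f*P))
          * (Real.log T)⁻¹) atTop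
        (nhds (R * (M:ℝ) * ((M:ℝ)-1) / Real.log (1 + f * P))) := by
      convert hconst using 2
      ring
    refine hcongr.congr' ?_
    filter_upwards [eventually_gt_atTop (1:ℝ)] with T hT
    have hT0 : 0 < T := by linarith
    have hlogT : 0 < Real.log T := Real.log_pos hT
    have hlogprod : Real.log (T*P/c) = Real.log T + Real.log (P/c) := by
      rw [mul_div_assoc, Real.log_mul (ne_of_gt hT0) (by positivity)]
    rw [hxdef, hlogprod]
    field_simp
    ring
  -- second term
  have h2 : Tendsto (fun T : ℝ => T * Real.log (1 + c/(T*D)) / Real.log T) atTop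
      (nhds 0) := by
    have hmul : Tendsto (fun T : ℝ => (T * Real.log (1 + (c/D)/T)) * (Real.log T)⁻¹)
        atTop (nhds ((c/D) * 0)) :=
      (Real.tendsto_mul_log_one_add_div_atTop (c/D)).mul
        (Real.tendsto_log_atTop.inv_tendsto_atTop)
    rw [mul_zero] at hmul
    refine hmul.congr fun T => ?_
    rw [div_div, mul_comm D T]; ring
  -- combine
  have hsum := h1.add h2
  rw [add_zero] at hsum
  refine hsum.congr' ?_
  filter_upwards [eventually_gt_atTop (1:ℝ)] with T hT
  have hT0 : 0 < T := by linarith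
  rw [hLdef, key T hT0]
  field_simp
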